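/- Let {x^N}_N be a sequence with x^N ∈ 𝒦_N = {x ∈ ℝ^{N+1} : x_{i+1}−x_i ≥ 1/(NM)}. Let μ̂^N := (N+1)^{-1} Σ_{i=0}^N δ_{x_i^N} be the empirical measure and μ^N := Σ_{i=0}^{N-1} (N(x^N_{i+1}−x^N_i))^{-1} 𝟙_{[x^N_i,x^N_{i+1})} ℒ¹ the piecewise-constant measure. Then for any μ ∈ 𝒫(ℝ), μ̂^N → μ vaguely (i.e. against all compactly supported continuous functions) if and only if μ^N → μ vaguely. -/

import Mathlib

open Set MeasureTheory Filter
open scoped ENNReal NNReal Topology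

/-- The cone `𝒦_N` of `N+1` ordered particles with consecutive gaps at least `1/(N M)`. -/
def InCone (N : ℕ) (M : ℝ) (x : Fin (N+1) → ℝ) : Prop :=
  ∀ i : Fin N, x i.castSucc + 1 / (N * M) ≤ x i.succ

/-- The empirical measure `(N+1)⁻¹ ∑_i δ_{x_i}`. -/
noncomputable def empMeas (N : ℕ) (x : Fin (N+1) → ℝ) : Measure ℝ :=
  ((N : ℝ≥0∞) + 1)⁻¹ • ∑ i : Fin (N+1), Measure.dirac (x i)

/-- The piecewise-constant measure `∑_{i<N} (N Δx_i)⁻¹ 𝟙_{[x_i,x_{i+1})} ℒ¹`. -/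
noncomputable def pcMeas (N : ℕ) (x : Fin (N+1) → ℝ) : Measure ℝ :=
  ∑ i : Fin N, (ENNReal.ofReal (1 / (N * (x i.succ - x i.castSucc)))) •
    volume.restrict (Ico (x i.castSucc) (x i.succ))

lemma empMeas_integral (N : ℕ) (x : Fin (N+1) → ℝ) {f : ℝ → ℝ}
    (hf : Continuous f) (hsupp : HasCompactSupport f) :
    ∫ y, f y ∂(empMeas N x) = ((N:ℝ)+1)⁻¹ * ∑ i : Fin (N+1), f (x i) := by
  rw [empMeas, integral_smul_measure,
    integral_finset_sum_measure (fun i _ => hf.integrable_of_hasCompactSupport hsupp)]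
  simp only [integral_dirac, ENNReal.toReal_inv, smul_eq_mul]
  rw [ENNReal.toReal_add (by simp) (by simp), ENNReal.toReal_natCast, ENNReal.toReal_one]

lemma pcMeas_integral (N : ℕ) (x : Fin (N+1) → ℝ)
    (hΔ : ∀ i : Fin N, 0 < x i.succ - x i.castSucc) {f : ℝ → ℝ}
    (hf : Continuous f) (hsupp : HasCompactSupport f) :
    ∫ y, f y ∂(pcMeas N x)
      = ∑ i : Fin N, (1 / (N * (x i.succ - x i.castSucc))) *
          ∫ y in Ico (x i.castSucc) (x i.succ), f y := by
  rw [pcMeas, integral_finset_sum_measure (fun i _ =>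
    ((hf.integrableOn_Icc).mono_set Ico_subset_Icc_self).smul_measure ENNReal.ofReal_ne_top)]
  refine Finset.sum_congr rfl fun i _ => ?_
  rw [integral_smul_measure, ENNReal.toReal_ofReal (by have := hΔ i; positivity), smul_eq_mul]

lemma per_interval (f : ℝ → ℝ) (hf : Continuous f)
    (C R δ ε' : ℝ) (hC0 : 0 ≤ C) (hC : ∀ y, |f y| ≤ C)
    (hsub : tsupport f ⊆ Icc (-R) R) (hδ : 0 < δ) (hε' : 0 ≤ ε')
    (hmod : ∀ s t : ℝ, |s - t| ≤ δ → |f s - f t| ≤ ε')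
    (n : ℝ) (hn : 1 ≤ n) (a b : ℝ) (hab : a < b) :
    |(1 / (n * (b - a))) * (∫ y in Ico a b, f y) - f a / n|
      ≤ ε' / n + (2 * C / (n * δ)) * (volume (Ico a b ∩ Icc (-R-δ) (R+δ))).toReal := by
  have hh : (0:ℝ) < b - a := by linarith
  have hn0 : (0:ℝ) < n := by linarith
  set ℓ : ℝ := (volume (Ico a b ∩ Icc (-R-δ) (R+δ))).toReal with hℓdef
  have hℓ0 : 0 ≤ ℓ := ENNReal.toReal_nonneg
  have hfint : IntegrableOn f (Ico a b) := (hf.integrableOn_Icc).mono_set Ico_subset_Icc_self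
  have hconst : ∫ _ in Ico a b, f a = (b - a) * f a := by
    rw [setIntegral_const, measureReal_def, Real.volume_Ico, ENNReal.toReal_ofReal hh.le, smul_eq_mul]
  have hfa : f a / n = (1 / (n * (b - a))) * ((b - a) * f a) := by
    field_simp
  have hsplit : (1 / (n * (b - a))) * (∫ y in Ico a b, f y) - f a / n
      = (1 / (n * (b - a))) * ∫ y in Ico a b, (f y - f a) := by
    rw [hfa, ← mul_sub, ← hconst,
      integral_sub hfint (integrableOn_const (by rw [Real.volume_Ico]; exact ENNReal.ofReal_ne_top))]
  rw [hsplit, abs_mul, abs_of_pos (show (0:ℝ) < 1 / (n * (b - a)) by positivity)]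
  by_cases hcase : b - a ≤ δ
  · -- short interval
    have hbound : |∫ y in Ico a b, (f y - f a)| ≤ ε' * (b - a) := by
      have := norm_setIntegral_le_of_norm_le_const (C := ε')
        (μ := volume) (s := Ico a b) (f := fun y => f y - f a)
        (by rw [Real.volume_Ico]; exact ENNReal.ofReal_lt_top)
        (fun y hy => by
          rw [Real.norm_eq_abs]
          exact hmod y a (by rw [abs_of_nonneg (by linarith [hy.1])]; linarith [hy.2]))
      rwa [Real.norm_eq_abs, measureReal_def, Real.volume_Ico, ENNReal.toReal_ofReal hh.le] at this
    calc 1 / (n * (b - a)) * |∫ y in Ico a b, (f y - f a)|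
        ≤ 1 / (n * (b - a)) * (ε' * (b - a)) := by
          exact mul_le_mul_of_nonneg_left hbound (by positivity)
      _ = ε' / n := by field_simp
      _ ≤ ε' / n + (2 * C / (n * δ)) * ℓ := le_add_of_nonneg_right (by positivity)
  · -- long interval
    push_neg at hcase
    have hfinIco : volume (Ico a b ∩ Icc (-R-δ) (R+δ)) ≠ ⊤ :=
      (lt_of_le_of_lt (measure_mono inter_subset_left)
        (by rw [Real.volume_Ico]; exact ENNReal.ofReal_lt_top)).ne
    -- part (i): |∫ f| ≤ C * ℓ
    have hint_supp : ∫ y in Ico a b, f y = ∫ y in Ico a b ∩ tsupport f, f y := by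
      conv_lhs => rw [← Set.indicator_eq_self.2 (subset_tsupport f)]
      rw [setIntegral_indicator (isClosed_tsupport f).measurableSet]
    have hvol_le : (volume (Ico a b ∩ tsupport f)).toReal ≤ ℓ := by
      refine ENNReal.toReal_mono hfinIco (measure_mono ?_)
      refine inter_subset_inter_right _ (hsub.trans ?_)
      intro y hy
      exact ⟨by linarith [hy.1], by linarith [hy.2]⟩
    have hi : |∫ y in Ico a b, f y| ≤ C * ℓ := by
      rw [hint_supp]
      have := norm_setIntegral_le_of_norm_le_const (C := C) (μ := volume)
        (s := Ico a b ∩ tsupport f) (f := f)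
        (lt_of_le_of_lt (measure_mono inter_subset_left)
          (by rw [Real.volume_Ico]; exact ENNReal.ofReal_lt_top))
        (fun y _ => by rw [Real.norm_eq_abs]; exact hC y)
      rw [Real.norm_eq_abs, measureReal_def] at this
      exact this.trans (mul_le_mul_of_nonneg_left hvol_le hC0)
    -- part (ii): |f a| ≤ C * ℓ / δ
    have hii : |f a| ≤ C * ℓ / δ := by
      by_cases hfa0 : f a = 0
      · rw [hfa0, abs_zero]; positivity
      · have haR : a ∈ Icc (-R) R := hsub (subset_closure (by exact hfa0))
        have hsubset : Ico a (a + δ) ⊆ Ico a b ∩ Icc (-R-δ) (R+δ) := by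
          intro y hy
          refine ⟨⟨hy.1, by linarith [hy.2]⟩, ⟨by linarith [hy.1, haR.1], by linarith [hy.2, haR.2]⟩⟩
        have hℓδ : δ ≤ ℓ := by
          have := ENNReal.toReal_mono hfinIco (measure_mono hsubset)
          rwa [Real.volume_Ico, add_sub_cancel_left, ENNReal.toReal_ofReal hδ.le] at this
        calc |f a| ≤ C := hC a
          _ ≤ C * ℓ / δ := by
            rw [le_div_iff₀ hδ]; nlinarith
    have habs : |∫ y in Ico a b, (f y - f a)| ≤ C * ℓ + (b - a) * (C * ℓ / δ) := by
      rw [integral_sub hfint (integrableOn_const (by rw [Real.volume_Ico]; exact ENNReal.ofReal_ne_top)), hconst]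
      calc |(∫ y in Ico a b, f y) - (b - a) * f a|
          ≤ |∫ y in Ico a b, f y| + |(b - a) * f a| := abs_sub _ _
        _ ≤ C * ℓ + (b - a) * (C * ℓ / δ) := by
            refine add_le_add hi ?_
            rw [abs_mul, abs_of_pos hh]
            exact mul_le_mul_of_nonneg_left hii hh.le
    calc 1 / (n * (b - a)) * |∫ y in Ico a b, (f y - f a)|
        ≤ 1 / (n * (b - a)) * (C * ℓ + (b - a) * (C * ℓ / δ)) :=
          mul_le_mul_of_nonneg_left habs (by positivity)
      _ = C * ℓ / (n * (b - a)) + C * ℓ / (n * δ) := by field_simp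
      _ ≤ C * ℓ / (n * δ) + C * ℓ / (n * δ) := by
          gcongr
      _ = (2 * C / (n * δ)) * ℓ := by ring
      _ ≤ ε' / n + (2 * C / (n * δ)) * ℓ := le_add_of_nonneg_left (by positivity)

lemma sum_inter_le (N : ℕ) (x : Fin (N+1) → ℝ) (hmono : StrictMono x)
    (J : Set ℝ) (hJ : MeasurableSet J) (hJfin : volume J ≠ ⊤) :
    ∑ i : Fin N, (volume (Ico (x i.castSucc) (x i.succ) ∩ J)).toReal ≤ (volume J).toReal := by
  set t : Fin N → Set ℝ := fun i => Ico (x i.castSucc) (x i.succ) ∩ J with ht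
  have htm : ∀ i : Fin N, MeasurableSet (t i) := fun i => measurableSet_Ico.inter hJ
  have hdisj : ((Finset.univ : Finset (Fin N)) : Set (Fin N)).PairwiseDisjoint t := by
    intro i _ j _ hij
    have key : ∀ i j : Fin N, i < j → Disjoint (t i) (t j) := by
      intro i j hij
      have hle : x i.succ ≤ x j.castSucc := by
        apply hmono.monotone
        rw [Fin.succ_le_castSucc_iff]
        exact hij
      refine Set.disjoint_left.2 fun y hy hy' => ?_
      have h1 : y < x i.succ := hy.1.2
      have h2 : x j.castSucc ≤ y := hy'.1.1
      linarith
    rcases lt_or_gt_of_ne hij with h | h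
    · exact key i j h
    · exact (key j i h).symm
  have hsum : ∑ i : Fin N, volume (t i) ≤ volume J := by
    rw [← measure_biUnion_finset hdisj (fun i _ => htm i)]
    refine measure_mono ?_
    intro y hy
    simp only [Finset.mem_coe, mem_iUnion] at hy
    obtain ⟨i, _, hi⟩ := hy
    exact hi.2
  have hfin : ∀ i ∈ (Finset.univ : Finset (Fin N)), volume (t i) ≠ ⊤ := by
    intro i _
    exact ((measure_mono inter_subset_right).trans_lt (lt_top_iff_ne_top.2 hJfin)).ne
  calc ∑ i : Fin N, (volume (t i)).toReal = (∑ i : Fin N, volume (t i)).toReal :=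
        (ENNReal.toReal_sum hfin).symm
    _ ≤ (volume J).toReal := ENNReal.toReal_mono hJfin hsum

lemma key_bound (M : ℝ) (hM : 0 < M) (N : ℕ) (hN : 1 ≤ N) (x : Fin (N+1) → ℝ)
    (hx : InCone N M x) (f : ℝ → ℝ) (hf : Continuous f) (hsupp : HasCompactSupport f)
    (C R δ ε' : ℝ) (hC0 : 0 ≤ C) (hC : ∀ y, |f y| ≤ C) (hR : 0 < R)
    (hsub : tsupport f ⊆ Icc (-R) R) (hδ : 0 < δ) (hε' : 0 ≤ ε')
    (hmod : ∀ s t : ℝ, |s - t| ≤ δ → |f s - f t| ≤ ε') :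
    |∫ y, f y ∂(pcMeas N x) - ∫ y, f y ∂(empMeas N x)|
      ≤ ε' + (2 * C * (2 * R + 2 * δ) / δ + 2 * C) / N := by
  have hN0 : (0:ℝ) < N := by exact_mod_cast hN
  have hg : (0:ℝ) < 1 / (N * M) := by positivity
  have hΔ : ∀ i : Fin N, 0 < x i.succ - x i.castSucc := fun i => by
    have := hx i; linarith
  have hmono : StrictMono x := Fin.strictMono_iff_lt_succ.2 fun i => by
    have := hΔ i; linarith
  set n : ℝ := (N : ℝ) with hn
  set S : ℝ := ∑ i : Fin N, f (x i.castSucc) with hS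
  set ℓ : Fin N → ℝ := fun i =>
    (volume (Ico (x i.castSucc) (x i.succ) ∩ Icc (-R-δ) (R+δ))).toReal with hℓ
  have hpc := pcMeas_integral N x hΔ hf hsupp
  have hemp := empMeas_integral N x hf hsupp
  have hemp' : ∫ y, f y ∂(empMeas N x) = (n+1)⁻¹ * (S + f (x (Fin.last N))) := by
    rw [hemp, Fin.sum_univ_castSucc]
  -- bound 1
  have hbound1 : |∫ y, f y ∂(pcMeas N x) - S / n| ≤ ε' + 2 * C * (2*R+2*δ) / δ / n := by
    rw [hpc]
    have hrw : (∑ i : Fin N, (1 / (N * (x i.succ - x i.castSucc))) *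
          ∫ y in Ico (x i.castSucc) (x i.succ), f y) - S / n
        = ∑ i : Fin N, ((1 / (n * (x i.succ - x i.castSucc))) *
            (∫ y in Ico (x i.castSucc) (x i.succ), f y) - f (x i.castSucc) / n) := by
      rw [Finset.sum_sub_distrib, hS, Finset.sum_div]
    rw [hrw]
    calc |∑ i : Fin N, ((1 / (n * (x i.succ - x i.castSucc))) *
            (∫ y in Ico (x i.castSucc) (x i.succ), f y) - f (x i.castSucc) / n)|
        ≤ ∑ i : Fin N, |(1 / (n * (x i.succ - x i.castSucc))) *
            (∫ y in Ico (x i.castSucc) (x i.succ), f y) - f (x i.castSucc) / n| :=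
          Finset.abs_sum_le_sum_abs _ _
      _ ≤ ∑ i : Fin N, (ε' / n + (2 * C / (n * δ)) * ℓ i) := by
          refine Finset.sum_le_sum fun i _ => ?_
          exact per_interval f hf C R δ ε' hC0 hC hsub hδ hε' hmod n
            (by rw [hn]; exact_mod_cast hN) _ _ (by linarith [hΔ i])
      _ = N * (ε' / n) + (2 * C / (n * δ)) * ∑ i : Fin N, ℓ i := by
          rw [Finset.sum_add_distrib, Finset.sum_const, Finset.card_univ, ← Finset.mul_sum]
          simp [nsmul_eq_mul]
      _ ≤ ε' + 2 * C * (2*R+2*δ) / δ / n := by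
          have hsumℓ : ∑ i : Fin N, ℓ i ≤ 2*R+2*δ := by
            have := sum_inter_le N x hmono (Icc (-R-δ) (R+δ)) measurableSet_Icc
              (by rw [Real.volume_Icc]; exact ENNReal.ofReal_ne_top)
            rw [Real.volume_Icc, ENNReal.toReal_ofReal (by linarith)] at this
            calc ∑ i : Fin N, ℓ i ≤ R + δ - (-R - δ) := this
              _ = 2*R+2*δ := by ring
          have h1 : (N:ℝ) * (ε' / n) = ε' := by field_simp; rw [hn]; ring
          have h2 : (2 * C / (n * δ)) * ∑ i : Fin N, ℓ i ≤ 2 * C * (2*R+2*δ) / δ / n := by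
            rw [div_div, div_mul_eq_mul_div, mul_comm δ n]
            gcongr
          linarith
  -- bound 2
  have habsS : |S| ≤ N * C := by
    calc |S| ≤ ∑ i : Fin N, |f (x i.castSucc)| := Finset.abs_sum_le_sum_abs _ _
      _ ≤ ∑ _i : Fin N, C := Finset.sum_le_sum fun i _ => hC _
      _ = N * C := by rw [Finset.sum_const, Finset.card_univ]; simp [nsmul_eq_mul]
  have hbound2 : |S / n - (n+1)⁻¹ * (S + f (x (Fin.last N)))| ≤ 2 * C / n := by
    have hc := hC (x (Fin.last N))
    have heq : S / n - (n+1)⁻¹ * (S + f (x (Fin.last N)))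
        = (S - n * f (x (Fin.last N))) / (n * (n+1)) := by
      field_simp; ring
    rw [heq]
    rw [abs_div, abs_of_pos (by positivity : (0:ℝ) < n * (n+1))]
    rw [div_le_iff₀ (by positivity)]
    have : |S - n * f (x (Fin.last N))| ≤ n * C + n * C := by
      calc |S - n * f (x (Fin.last N))| ≤ |S| + |n * f (x (Fin.last N))| := abs_sub _ _
        _ ≤ n * C + n * C := by
            refine add_le_add habsS ?_
            rw [abs_mul, abs_of_pos hN0]
            exact mul_le_mul_of_nonneg_left hc hN0.le
    calc |S - n * f (x (Fin.last N))| ≤ n * C + n * C := this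
      _ ≤ 2 * C / n * (n * (n+1)) := by
          have : 2 * C / n * (n * (n+1)) = 2 * C * (n + 1) := by field_simp
          rw [this]; nlinarith
  calc |∫ y, f y ∂(pcMeas N x) - ∫ y, f y ∂(empMeas N x)|
      ≤ |∫ y, f y ∂(pcMeas N x) - S / n| + |S / n - ∫ y, f y ∂(empMeas N x)| :=
        abs_sub_le _ _ _
    _ ≤ (ε' + 2 * C * (2*R+2*δ) / δ / n) + 2 * C / n := by
        rw [hemp']; exact add_le_add hbound1 hbound2
    _ = ε' + (2 * C * (2 * R + 2 * δ) / δ + 2 * C) / N := by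
        rw [hn]; field_simp; ring

lemma diff_tendsto (M : ℝ) (hM : 0 < M) (x : (N : ℕ) → Fin (N+1) → ℝ)
    (hx : ∀ N, InCone N M (x N)) (f : ℝ → ℝ) (hf : Continuous f)
    (hsupp : HasCompactSupport f) :
    Tendsto (fun N => ∫ y, f y ∂(pcMeas N (x N)) - ∫ y, f y ∂(empMeas N (x N)))
      atTop (𝓝 0) := by
  obtain ⟨C₀, hC₀⟩ := hsupp.exists_bound_of_continuous hf
  set C : ℝ := max C₀ 0 with hCdef
  have hC0 : 0 ≤ C := le_max_right _ _
  have hC : ∀ y, |f y| ≤ C := fun y => le_trans (by rw [← Real.norm_eq_abs]; exact hC₀ y) (le_max_left _ _)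
  obtain ⟨R₀, hR₀⟩ := hsupp.isBounded.subset_closedBall 0
  set R : ℝ := max R₀ 1 with hRdef
  have hR : 0 < R := lt_of_lt_of_le one_pos (le_max_right _ _)
  have hsub : tsupport f ⊆ Icc (-R) R := by
    refine hR₀.trans ?_
    intro y hy
    rw [Metric.mem_closedBall, Real.dist_eq, sub_zero] at hy
    have h1 : |y| ≤ R := hy.trans (le_max_left _ _)
    exact ⟨neg_le_of_abs_le h1, le_of_abs_le h1⟩
  rw [Metric.tendsto_atTop]
  intro ε hε
  have huc := hsupp.uniformContinuous_of_continuous hf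
  rw [Metric.uniformContinuous_iff] at huc
  obtain ⟨δ₀, hδ₀, hδ₀'⟩ := huc (ε/4) (by positivity)
  set δ : ℝ := δ₀ / 2 with hδdef
  have hδ : 0 < δ := by positivity
  have hmod : ∀ s t : ℝ, |s - t| ≤ δ → |f s - f t| ≤ ε/4 := by
    intro s t h
    have : dist s t < δ₀ := by rw [Real.dist_eq]; linarith
    exact (le_of_lt (by simpa [Real.dist_eq] using hδ₀' this))
  set K : ℝ := 2 * C * (2 * R + 2 * δ) / δ + 2 * C with hK
  have hKlim : Tendsto (fun N : ℕ => K / N) atTop (𝓝 0) :=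
    tendsto_const_div_atTop_nhds_zero_nat K
  have hev : ∀ᶠ N : ℕ in atTop, K / N < ε / 2 :=
    hKlim.eventually_lt_const (by linarith)
  rw [eventually_atTop] at hev
  obtain ⟨N₀, hN₀⟩ := hev
  refine ⟨max N₀ 1, fun N hNge => ?_⟩
  have hN1 : 1 ≤ N := le_trans (le_max_right _ _) hNge
  have hN0 : N₀ ≤ N := le_trans (le_max_left _ _) hNge
  rw [Real.dist_eq, sub_zero]
  calc |∫ y, f y ∂(pcMeas N (x N)) - ∫ y, f y ∂(empMeas N (x N))|
      ≤ ε/4 + K / N := by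
        have := key_bound M hM N hN1 (x N) (hx N) f hf hsupp C R δ (ε/4)
          hC0 hC hR hsub hδ (by positivity) hmod
        exact this
    _ < ε/4 + ε/2 := by
        have := hN₀ N hN0
        linarith
    _ < ε := by linarith

/-- for particles `x^N ∈ 𝒦_N`, the empirical measures converge vaguely to
`μ` if and only if the piecewise-constant measures converge vaguely to `μ`. -/
theorem emp_vague_iff_pc_vague (M : ℝ) (hM : 0 < M)
    (x : (N : ℕ) → Fin (N+1) → ℝ) (hx : ∀ N, InCone N M (x N))
    (μ : Measure ℝ) [IsProbabilityMeasure μ] :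
    (∀ f : ℝ → ℝ, Continuous f → HasCompactSupport f →
        Tendsto (fun N => ∫ y, f y ∂(empMeas N (x N))) atTop (𝓝 (∫ y, f y ∂μ)))
    ↔ (∀ f : ℝ → ℝ, Continuous f → HasCompactSupport f →
        Tendsto (fun N => ∫ y, f y ∂(pcMeas N (x N))) atTop (𝓝 (∫ y, f y ∂μ))) := by
  constructor
  · intro h f hf hs
    have H := (diff_tendsto M hM x hx f hf hs).add (h f hf hs)
    simpa using H
  · intro h f hf hs
    have H := (h f hf hs).sub (diff_tendsto M hM x hx f hf hs)
    simpa using H
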